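/- Let p and t be real numbers, and define the sequence G_n(p,t) by G_0(p,t) = 1 and G_n(p,t) = (p/n) Σ_{k=1}^{n} (−1)^{k+1} B_k(t) G_{n−k}(p,t) for n ≥ 1. Then for every n ≥ 1, (−1)^n G_n(p,t) = Σ_{r=1}^{n} ((−p)^r / r!) Σ_{(k_1,…,k_r)} [B_{k_1}(t) ⋯ B_{k_r}(t)] / (k_1 ⋯ k_r), where the inner sum ranges over all r-tuples (k_1,…,k_r) of positive integers with k_1 + ⋯ + k_r = n. -/

import Mathlib

open Finset

/-- The `k`-th Bernoulli polynomial evaluated at a real number `t`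
(generating function `u e^{tu}/(e^u - 1)`, so `B 1 t = t - 1/2`). -/
noncomputable def bern (k : ℕ) (t : ℝ) : ℝ :=
  Polynomial.aeval t (Polynomial.bernoulli k)

namespace Gaux

/-- the weight of a tuple -/
noncomputable def W (t : ℝ) {r : ℕ} (k : Fin r → ℕ) : ℝ :=
  (∏ i, bern (k i) t) / (∏ i, ((k i : ℕ) : ℝ))

/-- compositions of `n` into `r` positive parts -/
def S (r n : ℕ) : Finset (Fin r → ℕ) :=
  (Finset.Nat.antidiagonalTuple r n).filter (fun k => ∀ i, 1 ≤ k i)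

noncomputable def F (t : ℝ) (r n : ℕ) : ℝ := ∑ k ∈ S r n, W t k

lemma mem_S {r n : ℕ} {k : Fin r → ℕ} :
    k ∈ S r n ↔ (∑ i, k i = n) ∧ ∀ i, 1 ≤ k i := by
  simp [S, Finset.Nat.mem_antidiagonalTuple]

lemma F_of_lt (t : ℝ) {r n : ℕ} (h : n < r) : F t r n = 0 := by
  have hS : S r n = ∅ := by
    refine Finset.eq_empty_of_forall_notMem fun k hk => ?_
    obtain ⟨h1, h2⟩ := mem_S.mp hk
    have : r ≤ n := by
      calc r = ∑ _i : Fin r, 1 := by simp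
        _ ≤ ∑ i, k i := Finset.sum_le_sum fun i _ => h2 i
        _ = n := h1
    omega
  rw [F, hS, Finset.sum_empty]

lemma F_zero_pos (t : ℝ) {n : ℕ} (h : 1 ≤ n) : F t 0 n = 0 := by
  obtain ⟨m, rfl⟩ : ∃ m, n = m + 1 := ⟨n - 1, by omega⟩
  rw [F, S, Finset.Nat.antidiagonalTuple_zero_succ, Finset.filter_empty, Finset.sum_empty]

lemma F_zero_zero (t : ℝ) : F t 0 0 = 1 := by
  have hS : S 0 0 = {![]} := by
    rw [S, Finset.Nat.antidiagonalTuple_zero_zero]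
    refine Finset.filter_true_of_mem fun k _ i => i.elim0
  rw [F, hS, Finset.sum_singleton, W]
  simp

/-- splitting off the first coordinate -/
lemma split (t : ℝ) (r n : ℕ) :
    ∑ k ∈ S (r+1) n, ((k 0 : ℕ) : ℝ) * W t k
      = ∑ m ∈ Icc 1 n, bern m t * F t r (n - m) := by
  have hRHS : ∑ m ∈ Icc 1 n, bern m t * F t r (n - m)
      = ∑ x ∈ (Icc 1 n).sigma (fun m => S r (n - m)), bern x.1 t * W t x.2 := by
    rw [Finset.sum_sigma]
    exact Finset.sum_congr rfl fun m _ => by rw [F, Finset.mul_sum]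
  rw [hRHS]
  refine Finset.sum_nbij' (i := fun k => (⟨k 0, Fin.tail k⟩ : Σ _m : ℕ, Fin r → ℕ))
    (j := fun x => Fin.cons x.1 x.2) ?_ ?_ ?_ ?_ ?_
  · intro k hk
    obtain ⟨h1, h2⟩ := mem_S.mp hk
    rw [Fin.sum_univ_succ] at h1
    have hk0 : k 0 ≤ n := by
      have := Finset.sum_le_sum (s := (univ : Finset (Fin r)))
        (f := fun _ => 0) (g := fun i => k i.succ) (fun i _ => Nat.zero_le _)
      simp at this
      omega
    rw [Finset.mem_sigma, Finset.mem_Icc, mem_S]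
    refine ⟨⟨h2 0, hk0⟩, ?_, fun i => h2 i.succ⟩
    show ∑ i : Fin r, Fin.tail k i = n - k 0
    have h3 : ∑ i : Fin r, Fin.tail k i = ∑ i : Fin r, k i.succ :=
      Finset.sum_congr rfl (fun i _ => rfl)
    rw [h3]
    omega
  · rintro ⟨m, v⟩ hx
    rw [Finset.mem_sigma, Finset.mem_Icc] at hx
    obtain ⟨⟨hm1, hm2⟩, hv⟩ := hx
    obtain ⟨hv1, hv2⟩ := mem_S.mp hv
    dsimp only at hv1 hv2 hm1 hm2
    rw [mem_S]
    constructor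
    · show ∑ i : Fin (r+1), Fin.cons m v i = n
      rw [Fin.sum_univ_succ]
      simp only [Fin.cons_zero, Fin.cons_succ]
      omega
    · intro i
      refine Fin.cases ?_ ?_ i
      · simpa using hm1
      · intro j; simpa using hv2 j
  · intro k _
    simp [Fin.cons_self_tail]
  · rintro ⟨m, v⟩ _
    simp [Fin.cons_zero, Fin.tail_cons]
  · intro k hk
    obtain ⟨h1, h2⟩ := mem_S.mp hk
    have h0 : ((k 0 : ℕ) : ℝ) ≠ 0 := by
      have := h2 0; positivity
    have hQ : (∏ i : Fin r, ((Fin.tail k i : ℕ) : ℝ)) ≠ 0 := by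
      refine Finset.prod_ne_zero_iff.mpr fun i _ => ?_
      have := h2 i.succ
      have : (1 : ℕ) ≤ Fin.tail k i := h2 i.succ
      positivity
    show ((k 0 : ℕ) : ℝ) * W t k = bern (k 0) t * W t (Fin.tail k)
    rw [W, W, Fin.prod_univ_succ, Fin.prod_univ_succ]
    have htail1 : ∀ i : Fin r, bern (k i.succ) t = bern (Fin.tail k i) t := fun i => rfl
    have htail2 : ∀ i : Fin r, ((k i.succ : ℕ) : ℝ) = ((Fin.tail k i : ℕ) : ℝ) := fun i => rfl
    rw [Finset.prod_congr rfl fun i _ => htail1 i, Finset.prod_congr rfl fun i _ => htail2 i]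
    field_simp

/-- symmetry: the sum weighted by coordinate `j` equals that weighted by coordinate `0` -/
lemma sym (t : ℝ) (r n : ℕ) (j : Fin (r+1)) :
    ∑ k ∈ S (r+1) n, ((k j : ℕ) : ℝ) * W t k
      = ∑ k ∈ S (r+1) n, ((k 0 : ℕ) : ℝ) * W t k := by
  have hmem : ∀ k ∈ S (r+1) n, (k ∘ Equiv.swap 0 j) ∈ S (r+1) n := by
    intro k hk
    obtain ⟨h1, h2⟩ := mem_S.mp hk
    rw [mem_S]
    exact ⟨by rw [← h1]; exact Equiv.sum_comp (Equiv.swap 0 j) k, fun i => h2 _⟩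
  have hinv : ∀ k : Fin (r+1) → ℕ, (k ∘ Equiv.swap 0 j) ∘ Equiv.swap 0 j = k := by
    intro k; funext i
    simp [Function.comp, Equiv.swap_apply_self]
  refine Finset.sum_nbij' (i := fun k => k ∘ Equiv.swap 0 j)
    (j := fun k => k ∘ Equiv.swap 0 j) hmem hmem
    (fun k _ => hinv k) (fun k _ => hinv k) ?_
  intro k _
  have hW : W t (k ∘ Equiv.swap 0 j) = W t k := by
    rw [W, W]
    simp only [Function.comp_apply]
    rw [Equiv.prod_comp (Equiv.swap 0 j) (fun i => bern (k i) t),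
      Equiv.prod_comp (Equiv.swap 0 j) (fun i => ((k i : ℕ) : ℝ))]
  calc ((k j : ℕ) : ℝ) * W t k
      = ((k (Equiv.swap 0 j 0) : ℕ) : ℝ) * W t k := by rw [Equiv.swap_apply_left]
    _ = (((k ∘ Equiv.swap 0 j) 0 : ℕ) : ℝ) * W t (k ∘ Equiv.swap 0 j) := by
        rw [hW]; simp only [Function.comp_apply]

/-- the key recurrence for `F` -/
lemma nF (t : ℝ) (r n : ℕ) :
    (n : ℝ) * F t (r+1) n = ((r : ℝ)+1) * ∑ m ∈ Icc 1 n, bern m t * F t r (n - m) := by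
  rw [← split t r n]
  calc (n : ℝ) * F t (r+1) n = ∑ k ∈ S (r+1) n, (n : ℝ) * W t k := by
        rw [F, Finset.mul_sum]
    _ = ∑ k ∈ S (r+1) n, ∑ j : Fin (r+1), ((k j : ℕ) : ℝ) * W t k := by
        refine Finset.sum_congr rfl fun k hk => ?_
        obtain ⟨h1, _⟩ := mem_S.mp hk
        rw [← Finset.sum_mul, ← h1]
        push_cast
        ring
    _ = ∑ j : Fin (r+1), ∑ k ∈ S (r+1) n, ((k j : ℕ) : ℝ) * W t k := Finset.sum_comm
    _ = ∑ _j : Fin (r+1), ∑ k ∈ S (r+1) n, ((k 0 : ℕ) : ℝ) * W t k :=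
        Finset.sum_congr rfl fun j _ => sym t r n j
    _ = ((r : ℝ)+1) * ∑ k ∈ S (r+1) n, ((k 0 : ℕ) : ℝ) * W t k := by
        rw [Finset.sum_const, card_univ, Fintype.card_fin, nsmul_eq_mul]
        push_cast
        ring

end Gaux

open Gaux in
theorem G_main
    (p t : ℝ) (G : ℕ → ℝ) (hG0 : G 0 = 1)
    (hG : ∀ n : ℕ, 1 ≤ n →
      G n = (p / (n : ℝ)) *
        ∑ k ∈ Finset.Icc 1 n, (-1 : ℝ) ^ (k + 1) * bern k t * G (n - k)) :
    ∀ n : ℕ, 1 ≤ n →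
      (-1 : ℝ) ^ n * G n =
        ∑ r ∈ Finset.Icc 1 n, ((-p) ^ r / (Nat.factorial r : ℝ)) * F t r n := by
  intro n
  induction n using Nat.strong_induction_on with
  | _ n IH =>
  intro hn
  have hn' : (n : ℝ) ≠ 0 := by positivity
  -- key: partial sums give earlier values
  have key : ∀ m ∈ Icc 1 n,
      (-1 : ℝ) ^ (n - m) * G (n - m)
        = ∑ s ∈ range n, ((-p) ^ s / (Nat.factorial s : ℝ)) * F t s (n - m) := by
    intro m hm
    obtain ⟨hm1, hm2⟩ := Finset.mem_Icc.mp hm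
    rcases eq_or_lt_of_le hm2 with h | h
    · subst h
      simp only [Nat.sub_self]
      rw [Finset.sum_eq_single_of_mem 0 (Finset.mem_range.mpr (by omega))]
      · simp [hG0, F_zero_zero]
      · intro s _ hs
        rw [F_of_lt t (by omega)]
        ring
    · have hlt : n - m < n := by omega
      have hge : 1 ≤ n - m := by omega
      rw [IH (n - m) hlt hge]
      refine Finset.sum_subset ?_ ?_
      · intro s hs
        rw [Finset.mem_Icc] at hs
        rw [Finset.mem_range]
        omega
      · intro s hs1 hs2
        rw [Finset.mem_range] at hs1
        rw [Finset.mem_Icc] at hs2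
        rcases Nat.eq_zero_or_pos s with h0 | h0
        · subst h0
          rw [F_zero_pos t (by omega : 1 ≤ n - m)]
          ring
        · rw [F_of_lt t (by omega)]
          ring
  -- multiply through by n
  refine mul_left_cancel₀ hn' ?_
  -- LHS computation
  have hA : (n : ℝ) * ((-1 : ℝ) ^ n * G n)
      = ∑ m ∈ Icc 1 n, (-p) * (bern m t * ((-1 : ℝ) ^ (n - m) * G (n - m))) := by
    rw [hG n hn]
    have : (n : ℝ) * ((-1 : ℝ) ^ n *
        ((p / (n : ℝ)) * ∑ k ∈ Icc 1 n, (-1 : ℝ) ^ (k + 1) * bern k t * G (n - k)))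
        = (-1 : ℝ) ^ n * p * ∑ k ∈ Icc 1 n, (-1 : ℝ) ^ (k + 1) * bern k t * G (n - k) := by
      field_simp
    rw [this, Finset.mul_sum]
    refine Finset.sum_congr rfl fun m hm => ?_
    obtain ⟨_, hm2⟩ := Finset.mem_Icc.mp hm
    have hpow : (-1 : ℝ) ^ (n - m) * (-1 : ℝ) ^ m = (-1 : ℝ) ^ n := by
      rw [← pow_add, Nat.sub_add_cancel hm2]
    have hsq : ((-1 : ℝ) ^ m) * ((-1 : ℝ) ^ m) = 1 := by
      rw [← pow_add, ← two_mul, pow_mul]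
      norm_num
    have hkey : (-1 : ℝ) ^ n * (-1 : ℝ) ^ m = (-1 : ℝ) ^ (n - m) := by
      linear_combination (-(-1 : ℝ) ^ m) * hpow + (-1 : ℝ) ^ (n - m) * hsq
    linear_combination (-(p * bern m t * G (n - m))) * hkey
  rw [hA]
  -- RHS computation
  have hC : (n : ℝ) * ∑ r ∈ Icc 1 n, ((-p) ^ r / (Nat.factorial r : ℝ)) * F t r n
      = ∑ m ∈ Icc 1 n, (-p) *
          (bern m t * ∑ s ∈ range n, ((-p) ^ s / (Nat.factorial s : ℝ)) * F t s (n - m)) := by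
    rw [Finset.mul_sum]
    have hIcc : Icc 1 n = Ico 1 (n + 1) := by rw [Finset.Ico_add_one_right_eq_Icc]
    rw [hIcc, Finset.sum_Ico_eq_sum_range]
    simp only [Nat.add_sub_cancel]
    have hterm : ∀ s ∈ range n,
        (n : ℝ) * (((-p) ^ (1 + s) / (Nat.factorial (1 + s) : ℝ)) * F t (1 + s) n)
          = ∑ m ∈ Icc 1 n, (-p) *
              (bern m t * (((-p) ^ s / (Nat.factorial s : ℝ)) * F t s (n - m))) := by
      intro s _
      have h1s : 1 + s = s + 1 := by omega
      rw [h1s]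
      have hfac : (Nat.factorial (s + 1) : ℝ) = ((s : ℝ) + 1) * (Nat.factorial s : ℝ) := by
        rw [Nat.factorial_succ]
        push_cast
        ring
      have hnF := nF t s n
      have hfs : (Nat.factorial s : ℝ) ≠ 0 := by
        exact_mod_cast Nat.factorial_ne_zero s
      have hs1 : ((s : ℝ) + 1) ≠ 0 := by positivity
      calc (n : ℝ) * (((-p) ^ (s + 1) / (Nat.factorial (s + 1) : ℝ)) * F t (s + 1) n)
          = ((-p) ^ (s + 1) / (Nat.factorial (s + 1) : ℝ)) * ((n : ℝ) * F t (s + 1) n) := by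
            ring
        _ = ((-p) ^ (s + 1) / (Nat.factorial (s + 1) : ℝ)) *
              (((s : ℝ) + 1) * ∑ m ∈ Icc 1 n, bern m t * F t s (n - m)) := by rw [hnF]
        _ = (-p) * (((-p) ^ s / (Nat.factorial s : ℝ)) *
              ∑ m ∈ Icc 1 n, bern m t * F t s (n - m)) := by
            rw [hfac, pow_succ]
            field_simp
        _ = ∑ m ∈ Icc 1 n, (-p) *
              (bern m t * (((-p) ^ s / (Nat.factorial s : ℝ)) * F t s (n - m))) := by
            rw [Finset.mul_sum, Finset.mul_sum]
            refine Finset.sum_congr rfl fun m _ => ?_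
            ring
    rw [Finset.sum_congr rfl hterm, Finset.sum_comm]
    refine Finset.sum_congr rfl fun m _ => ?_
    rw [Finset.mul_sum, Finset.mul_sum]
  rw [hC]
  refine Finset.sum_congr rfl fun m hm => ?_
  rw [key m hm]

open Gaux in
/-- the explicit formula
`(-1)ⁿ Gₙ(p,t) = ∑_{r=1}^n ((-p)^r/r!) ∑_{k₁+⋯+k_r=n, kᵢ≥1} (B_{k₁}(t)⋯B_{k_r}(t))/(k₁⋯k_r)`,
the inner sum being over ordered tuples (compositions of `n` into `r` positive
parts). -/
theorem G_explicit_formula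
    (p t : ℝ) (G : ℕ → ℝ) (hG0 : G 0 = 1)
    (hG : ∀ n : ℕ, 1 ≤ n →
      G n = (p / (n : ℝ)) *
        ∑ k ∈ Finset.Icc 1 n, (-1 : ℝ) ^ (k + 1) * bern k t * G (n - k)) :
    ∀ n : ℕ, 1 ≤ n →
      (-1 : ℝ) ^ n * G n =
        ∑ r ∈ Finset.Icc 1 n, ((-p) ^ r / (Nat.factorial r : ℝ)) *
          ∑ k ∈ (Finset.Nat.antidiagonalTuple r n).filter (fun k => ∀ i, 1 ≤ k i),
            (∏ i, bern (k i) t) / (∏ i, ((k i : ℕ) : ℝ)) := by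
  intro n hn
  rw [G_main p t G hG0 hG n hn]
  rfl
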